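/- arXiv:2009.09461 — 3 statements merged into one kernel-verified Lean document; each statement's English description precedes it below -/
import Mathlib

section
/- A zigzag snake graph with d tiles has exactly d+1 perfect matchings. -/
/-- Lower-left corner positions of the tiles of the zigzag snake graph with tiles
glued alternately to the east and to the north. -/
def zigzagCorner : ℕ → ℤ × ℤ
  | 0 => (0, 0)
  | k + 1 => zigzagCorner k + (if k % 2 = 0 then (1, 0) else (0, 1))

/-- `v` is one of the four corners of the unit square tile with lower-left corner `c`. -/
def IsTileCorner (v c : ℤ × ℤ) : Prop :=
  v = c ∨ v = c + (1, 0) ∨ v = c + (0, 1) ∨ v = c + (1, 1)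

/-- Two lattice points at distance one (joined by a horizontal or vertical unit edge). -/
def UnitAdj (u v : ℤ × ℤ) : Prop :=
  u - v = (1, 0) ∨ v - u = (1, 0) ∨ u - v = (0, 1) ∨ v - u = (0, 1)

/-- The vertices of the zigzag snake graph with `d` tiles. -/
def zigzagVerts (d : ℕ) : Set (ℤ × ℤ) :=
  {v | ∃ k < d, IsTileCorner v (zigzagCorner k)}

/-- The zigzag snake graph with `d` tiles: edges are the unit sides of the tiles. -/
def zigzagGraph (d : ℕ) : SimpleGraph (zigzagVerts d) where
  Adj u v := UnitAdj u.1 v.1 ∧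
    ∃ k < d, IsTileCorner u.1 (zigzagCorner k) ∧ IsTileCorner v.1 (zigzagCorner k)
  symm := by
    constructor
    rintro u v ⟨h1, k, hk, hu, hv⟩
    refine ⟨?_, k, hk, hv, hu⟩
    unfold UnitAdj at h1 ⊢
    tauto
  loopless := by
    constructor
    rintro v ⟨h1, -⟩
    rcases h1 with h | h | h | h <;> simp [Prod.ext_iff] at h

/-! ### Auxiliary development -/

/-- The outer corner of tile `k` (the corner not shared with the neighbouring tiles). -/
def xpt (k : ℕ) : ℤ × ℤ :=
  if k % 2 = 0 then (((k/2 : ℕ) : ℤ), ((k/2 : ℕ) : ℤ) + 1)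
  else (((k/2 : ℕ) : ℤ) + 2, ((k/2 : ℕ) : ℤ))

lemma zc (k : ℕ) : zigzagCorner k = ((((k+1)/2 : ℕ) : ℤ), ((k/2 : ℕ) : ℤ)) := by
  induction k with
  | zero => rfl
  | succ n ih =>
    rw [zigzagCorner, ih]
    by_cases h : n % 2 = 0 <;> simp [h, Prod.ext_iff] <;> constructor <;> omega

@[simp] lemma c_eq_c_iff {a b : ℕ} : zigzagCorner a = zigzagCorner b ↔ a = b := by
  rw [zc, zc, Prod.ext_iff]; constructor
  · rintro ⟨h1, h2⟩; omega
  · rintro rfl; exact ⟨rfl, rfl⟩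

@[simp] lemma x_eq_x_iff {a b : ℕ} : xpt a = xpt b ↔ a = b := by
  unfold xpt; split_ifs <;> rw [Prod.ext_iff] <;> constructor <;> intro h <;>
    first | omega | (rcases h with ⟨h1, h2⟩; omega) | (subst h; exact ⟨rfl, rfl⟩)

@[simp] lemma c_ne_x {a b : ℕ} : ¬ (zigzagCorner a = xpt b) := by
  rw [zc]; unfold xpt; split_ifs <;> rw [Prod.ext_iff] <;> rintro ⟨h1, h2⟩ <;> omega

@[simp] lemma x_ne_c {a b : ℕ} : ¬ (xpt a = zigzagCorner b) := fun h => c_ne_x h.symm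

lemma tileCorner_iff (k : ℕ) (v : ℤ × ℤ) :
    IsTileCorner v (zigzagCorner k) ↔
      v = zigzagCorner k ∨ v = zigzagCorner (k+1) ∨ v = zigzagCorner (k+2) ∨ v = xpt k := by
  unfold IsTileCorner
  rw [zc k, zc (k+1), zc (k+2)]
  unfold xpt
  by_cases h : k % 2 = 0 <;>
    simp only [h, if_true, if_false, ite_true, ite_false, eq_self_iff_true, if_pos, if_neg,
      not_false_iff, Prod.mk_add_mk, Prod.ext_iff] <;>
    constructor <;> rintro (⟨h1,h2⟩|⟨h1,h2⟩|⟨h1,h2⟩|⟨h1,h2⟩)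
  all_goals try simp only [Prod.ext_iff]
  all_goals try (left; exact ⟨by omega, by omega⟩)
  all_goals try (right; left; exact ⟨by omega, by omega⟩)
  all_goals try (right; right; left; exact ⟨by omega, by omega⟩)
  all_goals (right; right; right; exact ⟨by omega, by omega⟩)

lemma unit_cc (k : ℕ) : UnitAdj (zigzagCorner k) (zigzagCorner (k+1)) := by
  unfold UnitAdj
  rw [zc, zc]
  simp only [Prod.mk_sub_mk, Prod.ext_iff]
  by_cases h : k % 2 = 0
  · right; left; exact ⟨by omega, by omega⟩
  · right; right; right; exact ⟨by omega, by omega⟩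

lemma unit_xc (k : ℕ) : UnitAdj (xpt k) (zigzagCorner k) := by
  unfold UnitAdj xpt
  rw [zc]
  by_cases h : k % 2 = 0 <;>
    simp only [h, ite_true, ite_false, Prod.mk_sub_mk, Prod.ext_iff]
  · right; right; left; exact ⟨by omega, by omega⟩
  · left; exact ⟨by omega, by omega⟩

lemma unit_xc2 (k : ℕ) : UnitAdj (xpt k) (zigzagCorner (k+2)) := by
  unfold UnitAdj xpt
  rw [zc]
  by_cases h : k % 2 = 0 <;>
    simp only [h, ite_true, ite_false, Prod.mk_sub_mk, Prod.ext_iff]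
  · right; left; exact ⟨by omega, by omega⟩
  · right; right; right; exact ⟨by omega, by omega⟩

lemma not_unit_cc2 (k : ℕ) : ¬ UnitAdj (zigzagCorner k) (zigzagCorner (k+2)) := by
  unfold UnitAdj
  rw [zc, zc]
  simp only [Prod.mk_sub_mk, Prod.ext_iff]
  rintro (⟨h1,h2⟩|⟨h1,h2⟩|⟨h1,h2⟩|⟨h1,h2⟩) <;> omega

lemma not_unit_c1x (k : ℕ) : ¬ UnitAdj (zigzagCorner (k+1)) (xpt k) := by
  unfold UnitAdj xpt
  rw [zc]
  by_cases h : k % 2 = 0 <;>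
    simp only [h, ite_true, ite_false, Prod.mk_sub_mk, Prod.ext_iff] <;>
    rintro (⟨h1,h2⟩|⟨h1,h2⟩|⟨h1,h2⟩|⟨h1,h2⟩) <;> omega

lemma unitAdj_symm {u v : ℤ × ℤ} (h : UnitAdj u v) : UnitAdj v u := by
  unfold UnitAdj at h ⊢; tauto

lemma not_unit_self (u : ℤ × ℤ) : ¬ UnitAdj u u := by
  unfold UnitAdj; simp [Prod.ext_iff]

lemma mem_verts_c {d k : ℕ} (hd : 1 ≤ d) (hk : k ≤ d + 1) : zigzagCorner k ∈ zigzagVerts d := by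
  rcases Nat.lt_or_ge k d with h | h
  · exact ⟨k, h, (tileCorner_iff k _).2 (Or.inl rfl)⟩
  · rcases Nat.eq_or_lt_of_le h with h' | h'
    · -- k = d
      refine ⟨d - 1, by omega, (tileCorner_iff (d-1) _).2 ?_⟩
      right; left; rw [c_eq_c_iff]; omega
    · -- k = d + 1
      refine ⟨d - 1, by omega, (tileCorner_iff (d-1) _).2 ?_⟩
      right; right; left; rw [c_eq_c_iff]; omega

lemma mem_verts_x {d k : ℕ} (hk : k < d) : xpt k ∈ zigzagVerts d :=
  ⟨k, hk, (tileCorner_iff k _).2 (by tauto)⟩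

lemma mem_verts_iff {d : ℕ} (hd : 1 ≤ d) (v : ℤ × ℤ) :
    v ∈ zigzagVerts d ↔ (∃ k, k ≤ d + 1 ∧ v = zigzagCorner k) ∨ ∃ k, k < d ∧ v = xpt k := by
  constructor
  · rintro ⟨k, hk, hc⟩
    rcases (tileCorner_iff k v).1 hc with h | h | h | h
    · exact Or.inl ⟨k, by omega, h⟩
    · exact Or.inl ⟨k+1, by omega, h⟩
    · exact Or.inl ⟨k+2, by omega, h⟩
    · exact Or.inr ⟨k, hk, h⟩
  · rintro (⟨k, hk, rfl⟩ | ⟨k, hk, rfl⟩)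
    · exact mem_verts_c hd hk
    · exact mem_verts_x hk

/-- Normal form for the edges of the zigzag snake graph. -/
def EdgeRel (d : ℕ) (a b : ℤ × ℤ) : Prop :=
  (∃ j, j ≤ d ∧ ((a = zigzagCorner j ∧ b = zigzagCorner (j+1)) ∨
      (b = zigzagCorner j ∧ a = zigzagCorner (j+1)))) ∨
  (∃ i, i < d ∧ ((a = xpt i ∧ (b = zigzagCorner i ∨ b = zigzagCorner (i+2))) ∨
      (b = xpt i ∧ (a = zigzagCorner i ∨ a = zigzagCorner (i+2)))))

lemma adj_iff {d : ℕ} (hd : 1 ≤ d) (u v : zigzagVerts d) :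
    (zigzagGraph d).Adj u v ↔ EdgeRel d u.1 v.1 := by
  constructor
  · rintro ⟨hu, k, hk, hcu, hcv⟩
    rcases (tileCorner_iff k _).1 hcu with h1 | h1 | h1 | h1 <;>
      rcases (tileCorner_iff k _).1 hcv with h2 | h2 | h2 | h2 <;>
      rw [h1, h2] at hu
    · exact absurd hu (not_unit_self _)
    · exact Or.inl ⟨k, by omega, Or.inl ⟨h1, h2⟩⟩
    · exact absurd hu (not_unit_cc2 k)
    · exact Or.inr ⟨k, hk, Or.inr ⟨h2, Or.inl h1⟩⟩
    · exact Or.inl ⟨k, by omega, Or.inr ⟨h2, h1⟩⟩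
    · exact absurd hu (not_unit_self _)
    · exact Or.inl ⟨k+1, by omega, Or.inl ⟨h1, h2⟩⟩
    · exact absurd hu (not_unit_c1x k)
    · exact absurd hu (fun h => not_unit_cc2 k (unitAdj_symm h))
    · exact Or.inl ⟨k+1, by omega, Or.inr ⟨h2, h1⟩⟩
    · exact absurd hu (not_unit_self _)
    · exact Or.inr ⟨k, hk, Or.inr ⟨h2, Or.inr h1⟩⟩
    · exact Or.inr ⟨k, hk, Or.inl ⟨h1, Or.inl h2⟩⟩
    · exact absurd hu (fun h => not_unit_c1x k (unitAdj_symm h))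
    · exact Or.inr ⟨k, hk, Or.inl ⟨h1, Or.inr h2⟩⟩
    · exact absurd hu (not_unit_self _)
  · intro h
    rcases h with ⟨j, hj, ⟨h1, h2⟩ | ⟨h1, h2⟩⟩ | ⟨i, hi, ⟨h1, h2 | h2⟩ | ⟨h1, h2 | h2⟩⟩
    · refine ⟨by rw [h1, h2]; exact unit_cc j, ?_⟩
      rcases Nat.lt_or_ge j d with h | h
      · exact ⟨j, h, (tileCorner_iff j _).2 (by rw [h1]; tauto),
          (tileCorner_iff j _).2 (by rw [h2]; tauto)⟩
      · have hjd : j = d := by omega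
        refine ⟨d - 1, by omega, (tileCorner_iff (d-1) _).2 ?_, (tileCorner_iff (d-1) _).2 ?_⟩
        · right; left; rw [h1, c_eq_c_iff]; omega
        · right; right; left; rw [h2, c_eq_c_iff]; omega
    · refine ⟨by rw [h1, h2]; exact unitAdj_symm (unit_cc j), ?_⟩
      rcases Nat.lt_or_ge j d with h | h
      · exact ⟨j, h, (tileCorner_iff j _).2 (by rw [h2]; tauto),
          (tileCorner_iff j _).2 (by rw [h1]; tauto)⟩
      · have hjd : j = d := by omega
        refine ⟨d - 1, by omega, (tileCorner_iff (d-1) _).2 ?_, (tileCorner_iff (d-1) _).2 ?_⟩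
        · right; right; left; rw [h2, c_eq_c_iff]; omega
        · right; left; rw [h1, c_eq_c_iff]; omega
    · exact ⟨by rw [h1, h2]; exact unit_xc i,
        ⟨i, hi, (tileCorner_iff i _).2 (by rw [h1]; tauto),
          (tileCorner_iff i _).2 (by rw [h2]; tauto)⟩⟩
    · exact ⟨by rw [h1, h2]; exact unit_xc2 i,
        ⟨i, hi, (tileCorner_iff i _).2 (by rw [h1]; tauto),
          (tileCorner_iff i _).2 (by rw [h2]; tauto)⟩⟩
    · exact ⟨by rw [h1, h2]; exact unitAdj_symm (unit_xc i),
        ⟨i, hi, (tileCorner_iff i _).2 (by rw [h2]; tauto),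
          (tileCorner_iff i _).2 (by rw [h1]; tauto)⟩⟩
    · exact ⟨by rw [h1, h2]; exact unitAdj_symm (unit_xc2 i),
        ⟨i, hi, (tileCorner_iff i _).2 (by rw [h2]; tauto),
          (tileCorner_iff i _).2 (by rw [h1]; tauto)⟩⟩

/-- The adjacency relation of the `j`-th perfect matching of the zigzag snake graph:
the cut happens at position `j`. -/
def MgRel (d j : ℕ) (a b : ℤ × ℤ) : Prop :=
  (a = zigzagCorner j ∧ b = zigzagCorner (j+1)) ∨
  (b = zigzagCorner j ∧ a = zigzagCorner (j+1)) ∨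
  (∃ i, i < j ∧ ((a = xpt i ∧ b = zigzagCorner i) ∨ (b = xpt i ∧ a = zigzagCorner i))) ∨
  (∃ i, j ≤ i ∧ i < d ∧
    ((a = xpt i ∧ b = zigzagCorner (i+2)) ∨ (b = xpt i ∧ a = zigzagCorner (i+2))))

lemma MgRel_symm {d j : ℕ} {a b : ℤ × ℤ} (h : MgRel d j a b) : MgRel d j b a := by
  rcases h with ⟨h1,h2⟩|⟨h1,h2⟩|⟨i,hi,h⟩|⟨i,hi1,hi2,h⟩
  · exact Or.inr (Or.inl ⟨h1, h2⟩)
  · exact Or.inl ⟨h1, h2⟩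
  · exact Or.inr (Or.inr (Or.inl ⟨i, hi, by tauto⟩))
  · exact Or.inr (Or.inr (Or.inr ⟨i, hi1, hi2, by tauto⟩))

lemma MgRel_c_iff {d j : ℕ} (k : ℕ) (b : ℤ × ℤ) :
    MgRel d j (zigzagCorner k) b ↔
      (k = j ∧ b = zigzagCorner (j+1)) ∨ (k = j+1 ∧ b = zigzagCorner j) ∨
      (k < j ∧ b = xpt k) ∨ (∃ i, k = i+2 ∧ j ≤ i ∧ i < d ∧ b = xpt i) := by
  unfold MgRel
  constructor
  · rintro (⟨h1,h2⟩|⟨h1,h2⟩|⟨i,hi,(⟨h1,h2⟩|⟨h1,h2⟩)⟩|⟨i,hi1,hi2,(⟨h1,h2⟩|⟨h1,h2⟩)⟩)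
    · exact Or.inl ⟨c_eq_c_iff.1 h1, h2⟩
    · exact Or.inr (Or.inl ⟨c_eq_c_iff.1 h2, h1⟩)
    · exact absurd h1 c_ne_x
    · have : i = k := c_eq_c_iff.1 h2.symm
      subst this
      exact Or.inr (Or.inr (Or.inl ⟨hi, h1⟩))
    · exact absurd h1 c_ne_x
    · exact Or.inr (Or.inr (Or.inr ⟨i, c_eq_c_iff.1 h2, hi1, hi2, h1⟩))
  · rintro (⟨rfl,h2⟩|⟨rfl,h2⟩|⟨h1,h2⟩|⟨i,rfl,hi1,hi2,h2⟩)
    · exact Or.inl ⟨rfl, h2⟩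
    · exact Or.inr (Or.inl ⟨h2, rfl⟩)
    · exact Or.inr (Or.inr (Or.inl ⟨k, h1, Or.inr ⟨h2, rfl⟩⟩))
    · exact Or.inr (Or.inr (Or.inr ⟨i, hi1, hi2, Or.inr ⟨h2, rfl⟩⟩))

lemma MgRel_x_iff {d j : ℕ} (k : ℕ) (b : ℤ × ℤ) :
    MgRel d j (xpt k) b ↔
      (k < j ∧ b = zigzagCorner k) ∨ (j ≤ k ∧ k < d ∧ b = zigzagCorner (k+2)) := by
  unfold MgRel
  constructor
  · rintro (⟨h1,h2⟩|⟨h1,h2⟩|⟨i,hi,(⟨h1,h2⟩|⟨h1,h2⟩)⟩|⟨i,hi1,hi2,(⟨h1,h2⟩|⟨h1,h2⟩)⟩)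
    · exact absurd h1 x_ne_c
    · exact absurd h2 x_ne_c
    · have : i = k := x_eq_x_iff.1 h1.symm
      subst this
      exact Or.inl ⟨hi, h2⟩
    · exact absurd h2 x_ne_c
    · have : i = k := x_eq_x_iff.1 h1.symm
      subst this
      exact Or.inr ⟨hi1, hi2, h2⟩
    · exact absurd h2 x_ne_c
  · rintro (⟨h1,h2⟩|⟨h1,h2,h3⟩)
    · exact Or.inr (Or.inr (Or.inl ⟨k, h1, Or.inl ⟨rfl, h2⟩⟩))
    · exact Or.inr (Or.inr (Or.inr ⟨k, h1, h2, Or.inl ⟨rfl, h3⟩⟩))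

/-- The `j`-th perfect matching as a subgraph of the zigzag snake graph. -/
def Mg (d j : ℕ) (hd : 1 ≤ d) (hj : j ≤ d) : (zigzagGraph d).Subgraph where
  verts := Set.univ
  Adj u v := MgRel d j u.1 v.1
  adj_sub := by
    intro u v h
    rw [adj_iff hd]
    rcases h with ⟨h1,h2⟩|⟨h1,h2⟩|⟨i,hi,h⟩|⟨i,hi1,hi2,(⟨h1,h2⟩|⟨h1,h2⟩)⟩
    · exact Or.inl ⟨j, hj, Or.inl ⟨h1, h2⟩⟩
    · exact Or.inl ⟨j, hj, Or.inr ⟨h1, h2⟩⟩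
    · refine Or.inr ⟨i, by omega, ?_⟩
      rcases h with ⟨h1,h2⟩|⟨h1,h2⟩
      · exact Or.inl ⟨h1, Or.inl h2⟩
      · exact Or.inr ⟨h1, Or.inl h2⟩
    · exact Or.inr ⟨i, hi2, Or.inl ⟨h1, Or.inr h2⟩⟩
    · exact Or.inr ⟨i, hi2, Or.inr ⟨h1, Or.inr h2⟩⟩
  edge_vert := fun _ => Set.mem_univ _
  symm := ⟨fun u v h => MgRel_symm h⟩

lemma Mg_adj {d j : ℕ} {hd : 1 ≤ d} {hj : j ≤ d} {u v : zigzagVerts d} :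
    (Mg d j hd hj).Adj u v ↔ MgRel d j u.1 v.1 := Iff.rfl

lemma Mg_isPM (d j : ℕ) (hd : 1 ≤ d) (hj : j ≤ d) : (Mg d j hd hj).IsPerfectMatching := by
  constructor
  · rintro ⟨v, hv⟩ -
    rcases (mem_verts_iff hd v).1 hv with ⟨k, hk, rfl⟩ | ⟨k, hk, rfl⟩
    · rcases Nat.lt_or_ge k j with h | h
      · -- k < j : partner is xpt k
        refine ⟨⟨xpt k, mem_verts_x (by omega)⟩, ?_, ?_⟩
        · exact (MgRel_c_iff k _).2 (Or.inr (Or.inr (Or.inl ⟨h, rfl⟩)))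
        · intro y hy
          rcases (MgRel_c_iff k y.1).1 hy with ⟨h1,h2⟩|⟨h1,h2⟩|⟨h1,h2⟩|⟨i,h1,h2,h3,h4⟩
          · omega
          · omega
          · exact Subtype.ext h2
          · omega
      · rcases Nat.lt_or_ge k (j+2) with h2 | h2
        · rcases (show k = j ∨ k = j + 1 by omega) with rfl | rfl
          · -- k = j : partner is c (j+1)
            refine ⟨⟨zigzagCorner (k+1), mem_verts_c hd (by omega)⟩, ?_, ?_⟩
            · exact (MgRel_c_iff k _).2 (Or.inl ⟨rfl, rfl⟩)
            · intro y hy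
              rcases (MgRel_c_iff k y.1).1 hy with ⟨h1,h2⟩|⟨h1,h2⟩|⟨h1,h2⟩|⟨i,h1,h2,h3,h4⟩
              · exact Subtype.ext h2
              · omega
              · omega
              · omega
          · -- k = j+1 : partner is c j
            refine ⟨⟨zigzagCorner j, mem_verts_c hd (by omega)⟩, ?_, ?_⟩
            · exact (MgRel_c_iff (j+1) _).2 (Or.inr (Or.inl ⟨rfl, rfl⟩))
            · intro y hy
              rcases (MgRel_c_iff (j+1) y.1).1 hy with ⟨h1,h2⟩|⟨h1,h2⟩|⟨h1,h2⟩|⟨i,h1,h2,h3,h4⟩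
              · omega
              · exact Subtype.ext h2
              · omega
              · omega
        · -- k ≥ j+2 : partner is xpt (k-2)
          obtain ⟨m, rfl⟩ : ∃ m, k = m + 2 := ⟨k - 2, by omega⟩
          refine ⟨⟨xpt m, mem_verts_x (by omega)⟩, ?_, ?_⟩
          · exact (MgRel_c_iff (m+2) _).2 (Or.inr (Or.inr (Or.inr ⟨m, rfl, by omega, by omega, rfl⟩)))
          · intro y hy
            rcases (MgRel_c_iff (m+2) y.1).1 hy with ⟨h1,h2⟩|⟨h1,h2⟩|⟨h1,h2⟩|⟨i,h1,h2,h3,h4⟩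
            · omega
            · omega
            · omega
            · have : i = m := by omega
              subst this
              exact Subtype.ext h4
    · rcases Nat.lt_or_ge k j with h | h
      · -- xpt k with k < j : partner c k
        refine ⟨⟨zigzagCorner k, mem_verts_c hd (by omega)⟩, ?_, ?_⟩
        · exact (MgRel_x_iff k _).2 (Or.inl ⟨h, rfl⟩)
        · intro y hy
          rcases (MgRel_x_iff k y.1).1 hy with ⟨h1,h2⟩|⟨h1,h2,h3⟩
          · exact Subtype.ext h2
          · omega
      · -- xpt k with j ≤ k < d : partner c (k+2)
        refine ⟨⟨zigzagCorner (k+2), mem_verts_c hd (by omega)⟩, ?_, ?_⟩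
        · exact (MgRel_x_iff k _).2 (Or.inr ⟨h, hk, rfl⟩)
        · intro y hy
          rcases (MgRel_x_iff k y.1).1 hy with ⟨h1,h2⟩|⟨h1,h2,h3⟩
          · omega
          · exact Subtype.ext h3
  · intro v
    exact Set.mem_univ v

/-- Adjacency in a subgraph of the zigzag snake graph, on raw points. -/
def Madj {d : ℕ} (M : (zigzagGraph d).Subgraph) (a b : ℤ × ℤ) : Prop :=
  ∃ (ha : a ∈ zigzagVerts d) (hb : b ∈ zigzagVerts d), M.Adj ⟨a, ha⟩ ⟨b, hb⟩

lemma Madj_of_adj {d : ℕ} {M : (zigzagGraph d).Subgraph} {u v : zigzagVerts d}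
    (h : M.Adj u v) : Madj M u.1 v.1 := ⟨u.2, v.2, h⟩

lemma adj_of_Madj {d : ℕ} {M : (zigzagGraph d).Subgraph} {u v : zigzagVerts d}
    (h : Madj M u.1 v.1) : M.Adj u v := by
  obtain ⟨ha, hb, h⟩ := h
  obtain ⟨a, ha'⟩ := u
  obtain ⟨b, hb'⟩ := v
  exact h

lemma Madj_symm {d : ℕ} {M : (zigzagGraph d).Subgraph} {a b : ℤ × ℤ}
    (h : Madj M a b) : Madj M b a := by
  obtain ⟨ha, hb, h⟩ := h
  exact ⟨hb, ha, h.symm⟩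

lemma Madj_unique {d : ℕ} {M : (zigzagGraph d).Subgraph} (hM : M.IsPerfectMatching)
    {a b b' : ℤ × ℤ} (h : Madj M a b) (h' : Madj M a b') : b = b' := by
  obtain ⟨ha, hb, h⟩ := h
  obtain ⟨ha', hb', h'⟩ := h'
  have := (hM.1 (hM.2 ⟨a, ha⟩)).unique h h'
  exact congrArg Subtype.val this

lemma Madj_edgeRel {d : ℕ} (hd : 1 ≤ d) {M : (zigzagGraph d).Subgraph} {a b : ℤ × ℤ}
    (h : Madj M a b) : EdgeRel d a b := by
  obtain ⟨ha, hb, h⟩ := h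
  exact (adj_iff hd _ _).1 (M.adj_sub h)

lemma Madj_exists {d : ℕ} {M : (zigzagGraph d).Subgraph} (hM : M.IsPerfectMatching)
    {a : ℤ × ℤ} (ha : a ∈ zigzagVerts d) : ∃ b, Madj M a b := by
  obtain ⟨w, hw, -⟩ := hM.1 (hM.2 ⟨a, ha⟩)
  exact ⟨w.1, ha, w.2, hw⟩

/-- Forcing step: if all outer corners before `j` are matched downwards, then `c j` is matched
either to `c (j+1)` or to `xpt j`. -/
lemma force_step {d : ℕ} (hd : 1 ≤ d) {M : (zigzagGraph d).Subgraph} (hM : M.IsPerfectMatching)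
    (j : ℕ) (hj : j ≤ d) (hp : ∀ i, i < j → Madj M (xpt i) (zigzagCorner i)) :
    Madj M (zigzagCorner j) (zigzagCorner (j+1)) ∨
      (j < d ∧ Madj M (zigzagCorner j) (xpt j)) := by
  obtain ⟨b, hb⟩ := Madj_exists hM (mem_verts_c hd (by omega) : zigzagCorner j ∈ zigzagVerts d)
  rcases Madj_edgeRel hd hb with ⟨j', hj', ⟨e1, e2⟩ | ⟨e1, e2⟩⟩ | ⟨i, hi, ⟨e1, e2⟩ | ⟨e1, e2⟩⟩
  · -- c j = c j', b = c (j'+1)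
    have : j' = j := c_eq_c_iff.1 e1.symm
    subst this
    subst e2
    exact Or.inl hb
  · -- b = c j', c j = c (j'+1), so j = j'+1 : contradiction with hp
    exfalso
    have hjj : j = j' + 1 := c_eq_c_iff.1 e2
    subst e1
    have h1 : Madj M (zigzagCorner j') (zigzagCorner j) := Madj_symm hb
    have h2 : Madj M (zigzagCorner j') (xpt j') := Madj_symm (hp j' (by omega))
    have := Madj_unique hM h1 h2
    exact c_ne_x this
  · exact absurd e1 c_ne_x
  · -- b = xpt i, c j = c i or c j = c (i+2)
    subst e1
    rcases e2 with e2 | e2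
    · have : i = j := c_eq_c_iff.1 e2.symm
      subst this
      exact Or.inr ⟨hi, hb⟩
    · exfalso
      have hji : j = i + 2 := c_eq_c_iff.1 e2
      have h1 : Madj M (xpt i) (zigzagCorner j) := Madj_symm hb
      have h2 : Madj M (xpt i) (zigzagCorner i) := hp i (by omega)
      have := Madj_unique hM h1 h2
      rw [c_eq_c_iff] at this
      omega

lemma exists_cut {d : ℕ} (hd : 1 ≤ d) {M : (zigzagGraph d).Subgraph}
    (hM : M.IsPerfectMatching) :
    ∃ j, j ≤ d ∧ (∀ i, i < j → Madj M (xpt i) (zigzagCorner i)) ∧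
      Madj M (zigzagCorner j) (zigzagCorner (j+1)) := by
  have key : ∀ n t, t ≤ d → d - t ≤ n → (∀ i, i < t → Madj M (xpt i) (zigzagCorner i)) →
      ∃ j, j ≤ d ∧ (∀ i, i < j → Madj M (xpt i) (zigzagCorner i)) ∧
        Madj M (zigzagCorner j) (zigzagCorner (j+1)) := by
    intro n
    induction n with
    | zero =>
      intro t ht hft hp
      have : t = d := by omega
      subst this
      rcases force_step hd hM t (le_refl _) hp with h | ⟨h, -⟩
      · exact ⟨t, le_refl _, hp, h⟩
      · omega
    | succ n ih =>
      intro t ht hft hp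
      rcases force_step hd hM t ht hp with h | ⟨hlt, h⟩
      · exact ⟨t, ht, hp, h⟩
      · refine ih (t+1) (by omega) (by omega) ?_
        intro i hi
        rcases Nat.lt_or_ge i t with h' | h'
        · exact hp i h'
        · have : i = t := by omega
          subst this
          exact Madj_symm h
  exact key d 0 (by omega) (by omega) (by omega)

/-- Forcing to the right of the cut. -/
lemma force_right {d : ℕ} (hd : 1 ≤ d) {M : (zigzagGraph d).Subgraph}
    (hM : M.IsPerfectMatching) {j : ℕ} (hj : j ≤ d)
    (hp : ∀ i, i < j → Madj M (xpt i) (zigzagCorner i))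
    (hc : Madj M (zigzagCorner j) (zigzagCorner (j+1))) :
    ∀ i, j ≤ i → i < d → Madj M (xpt i) (zigzagCorner (i+2)) := by
  intro i
  induction i using Nat.strong_induction_on with
  | _ i ih =>
    intro hji hid
    obtain ⟨b, hb⟩ := Madj_exists hM (mem_verts_x hid : xpt i ∈ zigzagVerts d)
    -- the only graph-neighbours of xpt i are c i and c (i+2)
    have hb' : b = zigzagCorner i ∨ b = zigzagCorner (i+2) := by
      rcases Madj_edgeRel hd hb with ⟨j', hj', ⟨e1, e2⟩ | ⟨e1, e2⟩⟩ | ⟨i', hi', ⟨e1, e2⟩ | ⟨e1, e2⟩⟩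
      · exact absurd e1 x_ne_c
      · exact absurd e2 x_ne_c
      · have : i' = i := x_eq_x_iff.1 e1.symm
        subst this
        exact e2
      · rcases e2 with e2 | e2 <;> exact absurd e2 x_ne_c
    rcases hb' with rfl | rfl
    · -- b = c i : impossible, c i is already matched
      exfalso
      have h1 : Madj M (zigzagCorner i) (xpt i) := Madj_symm hb
      rcases Nat.lt_or_ge i (j+2) with h' | h'
      · rcases (show i = j ∨ i = j + 1 by omega) with rfl | rfl
        · have := Madj_unique hM hc h1
          exact c_ne_x this
        · have h2 : Madj M (zigzagCorner (j+1)) (zigzagCorner j) := Madj_symm hc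
          have := Madj_unique hM h2 h1
          exact c_ne_x this
      · obtain ⟨m, rfl⟩ : ∃ m, i = m + 2 := ⟨i - 2, by omega⟩
        have h2 : Madj M (xpt m) (zigzagCorner (m+2)) := ih m (by omega) (by omega) (by omega)
        have := Madj_unique hM (Madj_symm h2) h1
        rw [x_eq_x_iff] at this
        omega
    · exact hb

lemma eq_Mg {d : ℕ} (hd : 1 ≤ d) {M : (zigzagGraph d).Subgraph} (hM : M.IsPerfectMatching) :
    ∃ j, ∃ hj : j ≤ d, M = Mg d j hd hj := by
  obtain ⟨j, hj, hp, hc⟩ := exists_cut hd hM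
  have hfr := force_right hd hM hj hp hc
  refine ⟨j, hj, ?_⟩
  apply SimpleGraph.Subgraph.ext
  · rw [SimpleGraph.Subgraph.isSpanning_iff.mp hM.2]; rfl
  · funext u v
    apply propext
    constructor
    · intro h
      have hm : Madj M u.1 v.1 := Madj_of_adj h
      show MgRel d j u.1 v.1
      rcases (mem_verts_iff hd u.1).1 u.2 with ⟨k, hk, hu⟩ | ⟨k, hk, hu⟩
      · rw [hu] at hm ⊢
        rw [MgRel_c_iff]
        rcases Nat.lt_or_ge k j with h' | h'
        · have : v.1 = xpt k := Madj_unique hM hm (Madj_symm (hp k h'))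
          exact Or.inr (Or.inr (Or.inl ⟨h', this⟩))
        · rcases Nat.lt_or_ge k (j+2) with h2 | h2
          · rcases (show k = j ∨ k = j + 1 by omega) with rfl | rfl
            · exact Or.inl ⟨rfl, Madj_unique hM hm hc⟩
            · exact Or.inr (Or.inl ⟨rfl, Madj_unique hM hm (Madj_symm hc)⟩)
          · obtain ⟨m, rfl⟩ : ∃ m, k = m + 2 := ⟨k - 2, by omega⟩
            have hmd : m < d := by omega
            have : v.1 = xpt m :=
              Madj_unique hM hm (Madj_symm (hfr m (by omega) hmd))
            exact Or.inr (Or.inr (Or.inr ⟨m, rfl, by omega, hmd, this⟩))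
      · rw [hu] at hm ⊢
        rw [MgRel_x_iff]
        rcases Nat.lt_or_ge k j with h' | h'
        · exact Or.inl ⟨h', Madj_unique hM hm (hp k h')⟩
        · exact Or.inr ⟨h', hk, Madj_unique hM hm (hfr k h' hk)⟩
    · intro h
      apply adj_of_Madj
      rcases (h : MgRel d j u.1 v.1) with ⟨e1,e2⟩|⟨e1,e2⟩|⟨i,hi,⟨e1,e2⟩|⟨e1,e2⟩⟩|⟨i,hi1,hi2,⟨e1,e2⟩|⟨e1,e2⟩⟩
      · rw [e1, e2]; exact hc
      · rw [e1, e2]; exact Madj_symm hc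
      · rw [e1, e2]; exact hp i hi
      · rw [e1, e2]; exact Madj_symm (hp i hi)
      · rw [e1, e2]; exact hfr i hi1 hi2
      · rw [e1, e2]; exact Madj_symm (hfr i hi1 hi2)

/-- A zigzag snake graph with `d` tiles has exactly `d + 1` perfect matchings. -/
theorem zigzag_num_perfect_matchings (d : ℕ) (hd : 1 ≤ d) :
    {M : (zigzagGraph d).Subgraph | M.IsPerfectMatching}.ncard = d + 1 := by
  set g : Fin (d+1) → (zigzagGraph d).Subgraph :=
    fun p => Mg d p.1 hd (Nat.lt_succ_iff.mp p.2) with hg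
  have ginj : Function.Injective g := by
    intro p q h
    have adjp : (Mg d p.1 hd (Nat.lt_succ_iff.mp p.2)).Adj
        ⟨zigzagCorner p.1, mem_verts_c hd (by omega)⟩
        ⟨zigzagCorner (p.1+1), mem_verts_c hd (by have := p.2; omega)⟩ :=
      Or.inl ⟨rfl, rfl⟩
    rw [show (Mg d p.1 hd (Nat.lt_succ_iff.mp p.2)) = g p from rfl, h] at adjp
    have := (MgRel_c_iff (d := d) (j := q.1) p.1 _).1 adjp
    rcases this with ⟨h1, h2⟩ | ⟨h1, h2⟩ | ⟨h1, h2⟩ | ⟨i, h1, h2, h3, h4⟩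
    · exact Fin.ext h1
    · rw [c_eq_c_iff] at h2; omega
    · exact absurd h2 c_ne_x
    · exact absurd h4 c_ne_x
  have hS : {M : (zigzagGraph d).Subgraph | M.IsPerfectMatching} = Set.range g := by
    ext M
    constructor
    · intro hM
      obtain ⟨j, hj, hMe⟩ := eq_Mg hd hM
      exact ⟨⟨j, by omega⟩, hMe.symm⟩
    · rintro ⟨p, rfl⟩
      exact Mg_isPM d p.1 hd (Nat.lt_succ_iff.mp p.2)
  rw [hS, ← Set.image_univ, Set.ncard_image_of_injective _ ginj, Set.ncard_univ,
    Nat.card_eq_fintype_card, Fintype.card_fin]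
end

section
/- Let k ≥ 1, let i_1 < i_2 < ⋯ < i_k be integers in I = {1,...,n}, and let a_1,...,a_k be integers satisfying: (a_j − a_{j−1})(a_{j+1} − a_j) < 0 for 2 ≤ j ≤ k−1, and |a_j − a_{j−1}| = i_j − i_{j−1} + 2 for 2 ≤ j ≤ k. Then there exists a function ξ: {1,...,n} → ℤ with |ξ(i) − ξ(i+1)| = 1 for all 1 ≤ i ≤ n−1 such that for each 1 ≤ ℓ ≤ k, either a_ℓ = ξ(i_ℓ) + 1 or a_ℓ = ξ(i_ℓ) − 1, and moreover ξ is strictly monotone on each interval [i_ℓ, i_{ℓ+1}] with the direction of monotonicity alternating between consecutive intervals. -/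
/-- Characterization of highest ℓ-weight monomials of Hernandez–Leclerc modules:
given indices `i 1 < i 2 < ⋯ < i k` in `{1,...,n}` and integers `a 1, ..., a k` with
`(a j − a (j−1)) * (a (j+1) − a j) < 0` for `2 ≤ j ≤ k−1` and
`|a j − a (j−1)| = i j − i (j−1) + 2` for `2 ≤ j ≤ k`, there is a height function
`ξ : {1,...,n} → ℤ` with each `a ℓ = ξ (i ℓ) ± 1`, and `ξ` strictly monotone on each
interval `[i ℓ, i (ℓ+1)]` with alternating directions. -/
theorem exists_height_function (n k : ℕ) (hk : 1 ≤ k) (i : ℕ → ℕ) (a : ℕ → ℤ)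
    (hrange : ∀ j, 1 ≤ j → j ≤ k → 1 ≤ i j ∧ i j ≤ n)
    (hmono : ∀ j, 1 ≤ j → j < k → i j < i (j + 1))
    (halt : ∀ j, 2 ≤ j → j + 1 ≤ k → (a j - a (j - 1)) * (a (j + 1) - a j) < 0)
    (hgap : ∀ j, 2 ≤ j → j ≤ k → |a j - a (j - 1)| = (i j : ℤ) - (i (j - 1) : ℤ) + 2) :
    ∃ ξ : ℕ → ℤ,
      (∀ x, 1 ≤ x → x + 1 ≤ n → |ξ x - ξ (x + 1)| = 1) ∧
      (∀ ℓ, 1 ≤ ℓ → ℓ ≤ k → a ℓ = ξ (i ℓ) + 1 ∨ a ℓ = ξ (i ℓ) - 1) ∧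
      ∃ s : ℕ → ℤ,
        (∀ ℓ, 1 ≤ ℓ → ℓ + 1 ≤ k →
          (s ℓ = 1 ∨ s ℓ = -1) ∧ ∀ x, i ℓ ≤ x → x < i (ℓ + 1) → ξ (x + 1) - ξ x = s ℓ) ∧
        (∀ ℓ, 1 ≤ ℓ → ℓ + 2 ≤ k → s (ℓ + 1) = -s ℓ) := by
  classical
  -- strict monotonicity of i on [1, k]
  have imono : ∀ q p, 1 ≤ p → p < q → q ≤ k → i p < i q := by
    intro q
    induction q with
    | zero => intro p _ h _; omega
    | succ q ih =>
      intro p hp hpq hq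
      rcases Nat.lt_succ_iff_lt_or_eq.mp hpq with h | h
      · exact lt_trans (ih p hp h (by omega)) (hmono q (by omega) (by omega))
      · subst h; exact hmono p hp (by omega)
  have ile : ∀ p q, 1 ≤ p → p ≤ q → q ≤ k → i p ≤ i q := by
    intro p q hp hpq hq
    rcases eq_or_lt_of_le hpq with h | h
    · subst h; exact le_refl _
    · exact le_of_lt (imono q p hp h hq)
  -- the signs
  set ε : ℕ → ℤ := fun j => if 0 < a (j + 1) - a j then 1 else -1 with hε
  have εpm : ∀ j, ε j = 1 ∨ ε j = -1 := by
    intro j; simp only [hε]; split <;> simp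
  have hstep : ∀ j, 1 ≤ j → j + 1 ≤ k →
      a (j + 1) - a j = ε j * ((i (j + 1) : ℤ) - (i j : ℤ) + 2) := by
    intro j hj hjk
    have hg := hgap (j + 1) (by omega) hjk
    simp only [Nat.add_sub_cancel] at hg
    have hd : (i j : ℤ) < (i (j + 1) : ℤ) := by
      exact_mod_cast hmono j hj (by omega)
    simp only [hε]
    rcases lt_trichotomy (a (j + 1) - a j) 0 with h | h | h
    · rw [abs_of_neg h] at hg
      rw [if_neg (by omega)]; linarith
    · rw [h] at hg; simp at hg; omega
    · rw [abs_of_pos h] at hg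
      rw [if_pos h]; linarith
  have halt' : ∀ ℓ, 1 ≤ ℓ → ℓ + 2 ≤ k → ε (ℓ + 1) = -ε ℓ := by
    intro ℓ hℓ hℓk
    have h := halt (ℓ + 1) (by omega) (by omega)
    simp only [Nat.add_sub_cancel] at h
    simp only [hε]
    split_ifs with h1 h2 h2 <;> first
      | rfl
      | (exfalso; nlinarith)
  -- the slope function
  set σ : ℕ → ℤ := fun x =>
    if h : ∃ j, 1 ≤ j ∧ j + 1 ≤ k ∧ i j ≤ x ∧ x < i (j + 1) then ε h.choose else 1
    with hσ
  have σpm : ∀ x, σ x = 1 ∨ σ x = -1 := by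
    intro x; simp only [hσ]; split
    · exact εpm _
    · left; rfl
  have σeq : ∀ ℓ x, 1 ≤ ℓ → ℓ + 1 ≤ k → i ℓ ≤ x → x < i (ℓ + 1) → σ x = ε ℓ := by
    intro ℓ x hℓ hℓk hx1 hx2
    have hex : ∃ j, 1 ≤ j ∧ j + 1 ≤ k ∧ i j ≤ x ∧ x < i (j + 1) := ⟨ℓ, hℓ, hℓk, hx1, hx2⟩
    simp only [hσ, dif_pos hex]
    obtain ⟨hj1, hjk, hjx1, hjx2⟩ := hex.choose_spec
    set j := hex.choose
    have : j = ℓ := by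
      by_contra hne
      rcases lt_or_gt_of_ne hne with h | h
      · have : i (j + 1) ≤ i ℓ := ile (j + 1) ℓ (by omega) (by omega) (by omega)
        omega
      · have : i (ℓ + 1) ≤ i j := ile (ℓ + 1) j (by omega) (by omega) (by omega)
        omega
    rw [this]
  -- the height function
  set ξ : ℕ → ℤ := fun x =>
    a 1 + ε 1 + ((∑ y ∈ Finset.Ico 1 x, σ y) - ∑ y ∈ Finset.Ico 1 (i 1), σ y) with hξ
  have ξstep : ∀ x, 1 ≤ x → ξ (x + 1) - ξ x = σ x := by
    intro x hx
    simp only [hξ]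
    rw [Finset.sum_Ico_succ_top hx]
    ring
  have ξ1 : ξ (i 1) = a 1 + ε 1 := by simp [hξ]
  -- telescoping over a segment
  have tele : ∀ ℓ, 1 ≤ ℓ → ℓ + 1 ≤ k →
      ξ (i (ℓ + 1)) = ξ (i ℓ) + ε ℓ * ((i (ℓ + 1) : ℤ) - (i ℓ : ℤ)) := by
    intro ℓ hℓ hℓk
    have h1 : 1 ≤ i ℓ := (hrange ℓ hℓ (by omega)).1
    have h2 : i ℓ ≤ i (ℓ + 1) := le_of_lt (hmono ℓ hℓ (by omega))
    have hsum : (∑ y ∈ Finset.Ico 1 (i ℓ), σ y) + (∑ y ∈ Finset.Ico (i ℓ) (i (ℓ + 1)), σ y)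
        = ∑ y ∈ Finset.Ico 1 (i (ℓ + 1)), σ y := Finset.sum_Ico_consecutive _ h1 h2
    have hconst : ∀ y ∈ Finset.Ico (i ℓ) (i (ℓ + 1)), σ y = ε ℓ := by
      intro y hy
      rw [Finset.mem_Ico] at hy
      exact σeq ℓ y hℓ hℓk hy.1 hy.2
    have : (∑ y ∈ Finset.Ico (i ℓ) (i (ℓ + 1)), σ y) = (i (ℓ + 1) - i ℓ : ℕ) * ε ℓ := by
      rw [Finset.sum_congr rfl hconst, Finset.sum_const, Nat.card_Ico, nsmul_eq_mul]
    rw [this] at hsum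
    have hcast : ((i (ℓ + 1) - i ℓ : ℕ) : ℤ) = (i (ℓ + 1) : ℤ) - (i ℓ : ℤ) :=
      Nat.cast_sub h2
    simp only [hξ]
    push_cast [hcast] at hsum ⊢
    linarith
  -- key invariant
  have key : ∀ ℓ, 1 ≤ ℓ → ℓ ≤ k →
      ∃ c : ℤ, (c = 1 ∨ c = -1) ∧ ξ (i ℓ) = a ℓ + c ∧ (ℓ + 1 ≤ k → c = ε ℓ) := by
    intro ℓ
    induction ℓ with
    | zero => intro h; omega
    | succ ℓ ih =>
      intro _ hℓk
      rcases Nat.eq_zero_or_pos ℓ with h0 | hpos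
      · subst h0
        exact ⟨ε 1, εpm 1, ξ1, fun _ => rfl⟩
      · obtain ⟨c, _, hc2, hc3⟩ := ih hpos (by omega)
        have hcε : c = ε ℓ := hc3 hℓk
        have ht := tele ℓ hpos hℓk
        have hs := hstep ℓ hpos hℓk
        refine ⟨-ε ℓ, ?_, ?_, ?_⟩
        · rcases εpm ℓ with h | h <;> simp [h]
        · rw [ht, hc2, hcε]; linarith
        · intro hk2
          rw [halt' ℓ hpos hk2]
  refine ⟨ξ, ?_, ?_, ε, ?_, ?_⟩
  · intro x hx _
    have h1 := ξstep x hx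
    have h2 : ξ x - ξ (x + 1) = -σ x := by linarith
    rcases σpm x with h | h <;> rw [h2, h] <;> norm_num
  · intro ℓ hℓ hℓk
    obtain ⟨c, hc1, hc2, _⟩ := key ℓ hℓ hℓk
    rcases hc1 with h | h
    · right; rw [hc2, h]; ring
    · left; rw [hc2, h]; ring
  · intro ℓ hℓ hℓk
    refine ⟨εpm ℓ, fun x hx1 hx2 => ?_⟩
    have h1 : 1 ≤ i ℓ := (hrange ℓ hℓ (by omega)).1
    rw [ξstep x (by omega), σeq ℓ x hℓ hℓk hx1 hx2]
  · exact halt'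
end

section
/- Let ξ: {1,...,n} → ℤ be a height function (|ξ(i)−ξ(i+1)| = 1), let 1 ≤ i < j ≤ n, and let i = i_1 < i_2 < ⋯ < i_k = j where i_2 < ⋯ < i_{k−1} enumerate the points p with i < p < j and ξ(p−1) = ξ(p+1). Define a_1 = ξ(i) + 1 if ξ(i+1) = ξ(i) − 1 and a_1 = ξ(i) − 1 if ξ(i+1) = ξ(i) + 1, and for ℓ ≥ 2 define a_ℓ = ξ(i_ℓ) + 1 if ξ(i_ℓ) = ξ(i_ℓ−1) + 1 and a_ℓ = ξ(i_ℓ) − 1 if ξ(i_ℓ) = ξ(i_ℓ−1) − 1. Then for all 2 ≤ ℓ ≤ k−1, (a_ℓ − a_{ℓ−1})(a_{ℓ+1} − a_ℓ) < 0, and for all 2 ≤ ℓ ≤ k, |a_ℓ − a_{ℓ−1}| = i_ℓ − i_{ℓ−1} + 2. -/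
/-- Converse direction of the characterization of HL highest weight monomials:
given a height function `ξ` on `{1,...,n}`, `1 ≤ i < j ≤ n`, the enumeration
`i = is 1 < is 2 < ⋯ < is k = j` where `is 2 < ⋯ < is (k−1)` enumerate the turning
points `p` with `i < p < j` and `ξ (p−1) = ξ (p+1)`, and the integers `a ℓ` defined
from `ξ` as in Brito–Chari, the sequences satisfy the alternation and gap conditions. -/
theorem hl_monomial_conditions (n k : ℕ) (hk : 2 ≤ k) (ξ : ℕ → ℤ) (i j : ℕ)
    (hi1 : 1 ≤ i) (hij : i < j) (hjn : j ≤ n)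
    (hheight : ∀ x, 1 ≤ x → x + 1 ≤ n → |ξ x - ξ (x + 1)| = 1)
    (is : ℕ → ℕ)
    (hfirst : is 1 = i) (hlast : is k = j)
    (hmono : ∀ ℓ, 1 ≤ ℓ → ℓ < k → is ℓ < is (ℓ + 1))
    (hturn : ∀ ℓ, 2 ≤ ℓ → ℓ + 1 ≤ k →
      i < is ℓ ∧ is ℓ < j ∧ ξ (is ℓ - 1) = ξ (is ℓ + 1))
    (hall : ∀ p, i < p → p < j → ξ (p - 1) = ξ (p + 1) →
      ∃ ℓ, 2 ≤ ℓ ∧ ℓ + 1 ≤ k ∧ is ℓ = p)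
    (a : ℕ → ℤ)
    (ha1 : (ξ (i + 1) = ξ i - 1 → a 1 = ξ i + 1) ∧ (ξ (i + 1) = ξ i + 1 → a 1 = ξ i - 1))
    (hal : ∀ ℓ, 2 ≤ ℓ → ℓ ≤ k →
      (ξ (is ℓ) = ξ (is ℓ - 1) + 1 → a ℓ = ξ (is ℓ) + 1) ∧
      (ξ (is ℓ) = ξ (is ℓ - 1) - 1 → a ℓ = ξ (is ℓ) - 1)) :
    (∀ ℓ, 2 ≤ ℓ → ℓ + 1 ≤ k → (a ℓ - a (ℓ - 1)) * (a (ℓ + 1) - a ℓ) < 0) ∧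
    (∀ ℓ, 2 ≤ ℓ → ℓ ≤ k → |a ℓ - a (ℓ - 1)| = (is ℓ : ℤ) - (is (ℓ - 1) : ℤ) + 2) := by
  -- the step function
  set s : ℕ → ℤ := fun p => ξ (p + 1) - ξ p with hs
  have hstep : ∀ p, 1 ≤ p → p + 1 ≤ n → s p = 1 ∨ s p = -1 := by
    intro p h1 h2
    have h := hheight p h1 h2
    rcases (abs_eq (by norm_num)).1 h with h' | h'
    · right; simp only [hs]; omega
    · left; simp only [hs]; omega
  -- monotonicity of is
  have hmono' : ∀ ℓ m, 1 ≤ ℓ → ℓ ≤ m → m ≤ k → is ℓ ≤ is m := by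
    intro ℓ m h1 h2 h3
    induction m with
    | zero => omega
    | succ m ih =>
      rcases Nat.lt_or_ge ℓ (m + 1) with h | h
      · have hm : is m < is (m + 1) := hmono m (by omega) (by omega)
        have := ih (by omega) (by omega)
        omega
      · have : ℓ = m + 1 := by omega
        simp [this]
  have hbound : ∀ ℓ, 1 ≤ ℓ → ℓ ≤ k → i ≤ is ℓ ∧ is ℓ ≤ j := by
    intro ℓ h1 h2
    constructor
    · have := hmono' 1 ℓ le_rfl h1 h2
      omega
    · have := hmono' ℓ k h1 h2 le_rfl
      omega
  -- no turning points strictly inside a segment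
  have hnoturn : ∀ ℓ p, 1 ≤ ℓ → ℓ + 1 ≤ k → is ℓ < p → p < is (ℓ + 1) →
      ξ (p - 1) ≠ ξ (p + 1) := by
    intro ℓ p h1 h2 hp1 hp2 hcon
    have hip : i < p := lt_of_le_of_lt (hbound ℓ h1 (by omega)).1 hp1
    have hpj : p < j := lt_of_lt_of_le hp2 (hbound (ℓ + 1) (by omega) h2).2
    obtain ⟨m, hm1, hm2, hm3⟩ := hall p hip hpj hcon
    rcases Nat.lt_or_ge m (ℓ + 1) with h | h
    · have := hmono' m ℓ (by omega) (by omega) (by omega)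
      omega
    · have := hmono' (ℓ + 1) m (by omega) h (by omega)
      omega
  -- s is constant on each segment
  have hsconst : ∀ ℓ, 1 ≤ ℓ → ℓ + 1 ≤ k → ∀ p, is ℓ ≤ p → p < is (ℓ + 1) →
      s p = s (is ℓ) := by
    intro ℓ h1 h2 p
    induction p with
    | zero =>
      intro hp _
      have := (hbound ℓ h1 (by omega)).1
      omega
    | succ p ih =>
      intro hp1 hp2
      rcases Nat.lt_or_ge p (is ℓ) with h | h
      · have : is ℓ = p + 1 := by omega
        rw [this]
      · have hsp : s p = s (is ℓ) := ih h (by omega)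
        have hi_le : i ≤ is ℓ := (hbound ℓ h1 (by omega)).1
        have hj_ge : is (ℓ + 1) ≤ j := (hbound (ℓ + 1) (by omega) h2).2
        have hne : ξ ((p + 1) - 1) ≠ ξ ((p + 1) + 1) :=
          hnoturn ℓ (p + 1) h1 h2 (by omega) hp2
        have hp1' : (p + 1) - 1 = p := by omega
        rw [hp1'] at hne
        have hsa : s p = 1 ∨ s p = -1 := hstep p (by omega) (by omega)
        have hsb : s (p + 1) = 1 ∨ s (p + 1) = -1 := hstep (p + 1) (by omega) (by omega)
        have hsum : s p + s (p + 1) = ξ (p + 1 + 1) - ξ p := by simp only [hs]; ring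
        rcases hsa with h' | h' <;> rcases hsb with h'' | h'' <;> omega
  -- telescoping : values of ξ on a segment
  have htel : ∀ ℓ, 1 ≤ ℓ → ℓ + 1 ≤ k → ∀ q, is ℓ ≤ q → q ≤ is (ℓ + 1) →
      ξ q = ξ (is ℓ) + s (is ℓ) * ((q : ℤ) - (is ℓ : ℤ)) := by
    intro ℓ h1 h2 q
    induction q with
    | zero =>
      intro hq _
      have := (hbound ℓ h1 (by omega)).1
      omega
    | succ q ih =>
      intro hq1 hq2
      rcases Nat.lt_or_ge q (is ℓ) with h | h
      · have hq : is ℓ = q + 1 := by omega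
        rw [hq]; ring
      · have hξ : ξ q = ξ (is ℓ) + s (is ℓ) * ((q : ℤ) - (is ℓ : ℤ)) :=
          ih h (by omega)
        have hsq : s q = s (is ℓ) := hsconst ℓ h1 h2 q h (by omega)
        have : ξ (q + 1) = ξ q + s q := by simp only [hs]; ring
        rw [this, hξ, hsq]
        push_cast
        ring
  -- alternation of s at turning points
  have halt : ∀ ℓ, 2 ≤ ℓ → ℓ + 1 ≤ k → s (is ℓ) = - s (is ℓ - 1) := by
    intro ℓ h1 h2
    obtain ⟨hi_lt, _, hturnℓ⟩ := hturn ℓ h1 h2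
    have h2' : 2 ≤ is ℓ := by omega
    have hsub : (is ℓ - 1) + 1 = is ℓ := by omega
    have e1 : s (is ℓ) = ξ (is ℓ + 1) - ξ (is ℓ) := rfl
    have e2 : s (is ℓ - 1) = ξ (is ℓ) - ξ (is ℓ - 1) := by
      simp only [hs, hsub]
    omega
  -- step just before is ℓ equals step of previous segment
  have hprev : ∀ ℓ, 2 ≤ ℓ → ℓ ≤ k → s (is ℓ - 1) = s (is (ℓ - 1)) := by
    intro ℓ h1 h2
    have hsub : (ℓ - 1) + 1 = ℓ := by omega
    have hlt : is (ℓ - 1) < is ℓ := by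
      have := hmono (ℓ - 1) (by omega) (by omega)
      rwa [hsub] at this
    exact hsconst (ℓ - 1) (by omega) (by omega) (is ℓ - 1) (by omega)
      (by rw [hsub]; omega)
  -- formulas for a
  have hi2 : ∀ ℓ, 2 ≤ ℓ → ℓ ≤ k → 2 ≤ is ℓ ∧ is ℓ ≤ n := by
    intro ℓ h1 h2
    have h3 : is 1 < is 2 := by simpa using hmono 1 le_rfl (by omega)
    have h4 := hmono' 2 ℓ (by omega) h1 h2
    have h5 := (hbound ℓ (by omega) h2).2
    omega
  have ha1' : a 1 = ξ i - s i := by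
    rcases hstep i hi1 (by omega) with h | h
    · have : ξ (i + 1) = ξ i + 1 := by simp only [hs] at h; omega
      rw [ha1.2 this, h]
    · have : ξ (i + 1) = ξ i - 1 := by simp only [hs] at h; omega
      rw [ha1.1 this, h]; ring
  have hal2 : ∀ ℓ, 2 ≤ ℓ → ℓ ≤ k → a ℓ = ξ (is ℓ) + s (is (ℓ - 1)) := by
    intro ℓ h1 h2
    obtain ⟨hℓ2, hℓn⟩ := hi2 ℓ h1 h2
    have hsub : (is ℓ - 1) + 1 = is ℓ := by omega
    have e2 : s (is ℓ - 1) = ξ (is ℓ) - ξ (is ℓ - 1) := by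
      simp only [hs, hsub]
    rw [← hprev ℓ h1 h2]
    rcases hstep (is ℓ - 1) (by omega) (by omega) with h | h
    · have hx : ξ (is ℓ) = ξ (is ℓ - 1) + 1 := by omega
      rw [(hal ℓ h1 h2).1 hx, h]
    · have hx : ξ (is ℓ) = ξ (is ℓ - 1) - 1 := by omega
      rw [(hal ℓ h1 h2).2 hx, h]; ring
  have haux : ∀ m, 1 ≤ m → m + 1 ≤ k → a m = ξ (is m) - s (is m) := by
    intro m h1 h2
    rcases Nat.lt_or_ge m 2 with h | h
    · have hm1 : m = 1 := by omega
      rw [hm1, hfirst, ha1']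
    · rw [hal2 m h (by omega), ← hprev m h (by omega), halt m h h2]
      ring
  -- the key identity
  have hkey : ∀ ℓ, 2 ≤ ℓ → ℓ ≤ k →
      a ℓ - a (ℓ - 1) = s (is (ℓ - 1)) * ((is ℓ : ℤ) - (is (ℓ - 1) : ℤ) + 2) := by
    intro ℓ h1 h2
    have hsub : (ℓ - 1) + 1 = ℓ := by omega
    have hxi : ξ (is ℓ) = ξ (is (ℓ - 1)) + s (is (ℓ - 1)) * ((is ℓ : ℤ) - (is (ℓ - 1) : ℤ)) := by
      exact htel (ℓ - 1) (by omega) (by omega) (is ℓ)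
        (by have := hmono (ℓ - 1) (by omega) (by omega); rw [hsub] at this; omega)
        (by rw [hsub])
    rw [hal2 ℓ h1 h2, haux (ℓ - 1) (by omega) (by omega), hxi]
    ring
  constructor
  · -- alternation
    intro ℓ h1 h2
    have hA := hkey ℓ h1 (by omega)
    have hB := hkey (ℓ + 1) (by omega) h2
    have hsub : (ℓ + 1) - 1 = ℓ := by omega
    rw [hsub] at hB
    have hsalt : s (is ℓ) = - s (is (ℓ - 1)) := by
      rw [halt ℓ h1 h2, hprev ℓ h1 (by omega)]
    have hlt1 : is (ℓ - 1) < is ℓ := by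
      have hsub' : (ℓ - 1) + 1 = ℓ := by omega
      have := hmono (ℓ - 1) (by omega) (by omega)
      rwa [hsub'] at this
    have hlt2 : is ℓ < is (ℓ + 1) := hmono ℓ (by omega) (by omega)
    have hP : (0 : ℤ) < (is ℓ : ℤ) - (is (ℓ - 1) : ℤ) + 2 := by omega
    have hQ : (0 : ℤ) < (is (ℓ + 1) : ℤ) - (is ℓ : ℤ) + 2 := by omega
    have hsv : s (is (ℓ - 1)) = 1 ∨ s (is (ℓ - 1)) = -1 := by
      have hb1 := (hbound (ℓ - 1) (by omega) (by omega)).1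
      have hb2 := (hbound ℓ (by omega) (by omega)).2
      exact hstep (is (ℓ - 1)) (by omega) (by omega)
    rw [hA, hB, hsalt]
    rcases hsv with h | h <;> rw [h] <;> nlinarith
  · -- gap
    intro ℓ h1 h2
    have hA := hkey ℓ h1 h2
    have hlt1 : is (ℓ - 1) < is ℓ := by
      have hsub' : (ℓ - 1) + 1 = ℓ := by omega
      have := hmono (ℓ - 1) (by omega) (by omega)
      rwa [hsub'] at this
    have hP : (0 : ℤ) ≤ (is ℓ : ℤ) - (is (ℓ - 1) : ℤ) + 2 := by omega
    have hsv : s (is (ℓ - 1)) = 1 ∨ s (is (ℓ - 1)) = -1 := by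
      have hb1 := (hbound (ℓ - 1) (by omega) (by omega)).1
      have hb2 := (hbound ℓ (by omega) h2).2
      exact hstep (is (ℓ - 1)) (by omega) (by omega)
    rw [hA]
    rcases hsv with h | h <;> rw [h]
    · rw [one_mul, abs_of_nonneg hP]
    · rw [neg_one_mul, abs_neg, abs_of_nonneg hP]
end
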